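/- For every r > 0 one has b(r) + c(r) > 0. -/

import Mathlib

open Set Filter Topology

/-- If `f` has positive derivative at `x`, then arbitrarily close to the left of `x`
there are points where `f` is smaller than `f x`. -/
lemma exists_left_lt_of_hasDerivAt_pos {f : ℝ → ℝ} {d x : ℝ} (hf : HasDerivAt f d x)
    (hd : 0 < d) (l : ℝ) (hl : l < x) : ∃ t, l < t ∧ t < x ∧ f t < f x := by
  have h : Tendsto (slope f x) (𝓝[<] x) (𝓝 d) :=
    (hasDerivAt_iff_tendsto_slope.mp hf).mono_left
      (nhdsWithin_mono x (fun t ht => ne_of_lt ht))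
  have hpos : ∀ᶠ t in 𝓝[<] x, 0 < slope f x t := h.eventually_const_lt hd
  have hmem : ∀ᶠ t in 𝓝[<] x, l < t ∧ t < x :=
    Filter.eventually_of_mem (Ioo_mem_nhdsLT hl) (fun t ht => ⟨ht.1, ht.2⟩)
  obtain ⟨t, ht1, ht2, ht3⟩ := (hpos.and hmem).exists
  refine ⟨t, ht2, ht3, ?_⟩
  rw [slope_def_field] at ht1
  have hden : t - x < 0 := by linarith
  by_contra hge
  push_neg at hge
  have : (f t - f x) / (t - x) ≤ 0 := div_nonpos_of_nonneg_of_nonpos (by linarith) hden.le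
  linarith

/-- For the coefficient functions of the Atiyah–Hitchin metric, `b(r) + c(r) > 0`
for every `r > 0`. -/
theorem atiyah_hitchin_b_add_c_pos
    (m : ℝ) (hm : 0 < m)
    (a b c : ℝ → ℝ)
    (hca : ContinuousOn a (Set.Ici 0))
    (hcb : ContinuousOn b (Set.Ici 0))
    (hcc : ContinuousOn c (Set.Ici 0))
    (hda : ∀ r > (0:ℝ),
      HasDerivAt a ((a r ^ 2 - (b r - c r) ^ 2) / (2 * b r * c r)) r)
    (hdb : ∀ r > (0:ℝ),
      HasDerivAt b ((b r ^ 2 - (c r - a r) ^ 2) / (2 * c r * a r)) r)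
    (hdc : ∀ r > (0:ℝ),
      HasDerivAt c ((c r ^ 2 - (a r - b r) ^ 2) / (2 * a r * b r)) r)
    (hia : a 0 = 0) (hib : b 0 = -m) (hic : c 0 = m)
    (hapos : ∀ r > (0:ℝ), 0 < a r)
    (hcpos : ∀ r > (0:ℝ), 0 < c r)
    (hbneg : ∀ r > (0:ℝ), b r < 0) :
    ∀ r > (0:ℝ), 0 < b r + c r := by
  -- the derivative of s = b + c
  set D : ℝ → ℝ := fun r =>
    (b r ^ 2 - (c r - a r) ^ 2) / (2 * c r * a r) +
    (c r ^ 2 - (a r - b r) ^ 2) / (2 * a r * b r) with hDdef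
  have hds : ∀ r > (0:ℝ), HasDerivAt (fun r => b r + c r) (D r) r := fun r hr =>
    (hdb r hr).add (hdc r hr)
  have hscont : ContinuousOn (fun r => b r + c r) (Set.Ici 0) := hcb.add hcc
  -- sign of the derivative when s ≤ 0 and the second factor is positive
  have hdpos : ∀ r > (0:ℝ), b r + c r ≤ 0 →
      0 < a r * (b r + c r) + (b r - c r) ^ 2 → 0 < D r := by
    intro r hr hs hq
    have ha := hapos r hr
    have hb := hbneg r hr
    have hc := hcpos r hr
    have key : D r = (b r + c r - a r) * (a r * (b r + c r) + (b r - c r) ^ 2) /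
        (2 * a r * b r * c r) := by
      have ha' := ha.ne'
      have hb' := hb.ne
      have hc' := hc.ne'
      rw [hDdef]
      field_simp
      ring
    rw [key]
    have hnum : (b r + c r - a r) * (a r * (b r + c r) + (b r - c r) ^ 2) < 0 :=
      mul_neg_of_neg_of_pos (by linarith) hq
    have hden : 2 * a r * b r * c r < 0 := by nlinarith [mul_pos ha hc]
    exact div_pos_of_neg_of_neg hnum hden
  -- continuity at 0 gives bounds on a small interval
  have hb0 : Tendsto b (𝓝[Set.Ici (0:ℝ)] 0) (𝓝 (-m)) := by
    have := hcb 0 Set.self_mem_Ici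
    rwa [ContinuousWithinAt, hib] at this
  have hc0 : Tendsto c (𝓝[Set.Ici (0:ℝ)] 0) (𝓝 m) := by
    have := hcc 0 Set.self_mem_Ici
    rwa [ContinuousWithinAt, hic] at this
  have ha0 : Tendsto a (𝓝[Set.Ici (0:ℝ)] 0) (𝓝 0) := by
    have := hca 0 Set.self_mem_Ici
    rwa [ContinuousWithinAt, hia] at this
  have hev : ∀ᶠ r in 𝓝[Set.Ici (0:ℝ)] 0,
      (b r < -m/2 ∧ -(3*m/2) < b r) ∧ (c r < 3*m/2 ∧ m/2 < c r) ∧ a r < m := by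
    filter_upwards [hb0.eventually_lt_const (show -m < -m/2 by linarith),
      hb0.eventually_const_lt (show -(3*m/2) < -m by linarith),
      hc0.eventually_lt_const (show m < 3*m/2 by linarith),
      hc0.eventually_const_lt (show m/2 < m by linarith),
      ha0.eventually_lt_const hm] with r h1 h2 h3 h4 h5
    exact ⟨⟨h1, h2⟩, ⟨h3, h4⟩, h5⟩
  rw [Filter.eventually_iff, mem_nhdsGE_iff_exists_Icc_subset] at hev
  obtain ⟨ε, hε, hsub⟩ := hev
  -- on (0, ε] the second factor is positive whenever s ≤ 0
  have hq : ∀ r, 0 < r → r ≤ ε → b r + c r ≤ 0 →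
      0 < a r * (b r + c r) + (b r - c r) ^ 2 := by
    intro r hr hrε hs
    obtain ⟨⟨h1, h2⟩, ⟨h3, h4⟩, h5⟩ := hsub ⟨hr.le, hrε⟩
    have ha := hapos r hr
    have h6 : m < c r - b r := by linarith
    have h7 : m ^ 2 < (b r - c r) ^ 2 := by nlinarith
    have h8 : -m < b r + c r := by linarith
    nlinarith [mul_pos ha (show 0 < b r + c r + m by linarith),
      mul_pos hm (show 0 < m - a r by linarith)]
  -- Step 1: positivity on (0, ε]
  have hpos_eps : ∀ r, 0 < r → r ≤ ε → 0 < b r + c r := by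
    intro r1 hr1 hr1ε
    by_contra hcon
    push_neg at hcon
    have hcont1 : ContinuousOn (fun r => b r + c r) (Set.Icc 0 r1) :=
      hscont.mono (Set.Icc_subset_Ici_self)
    obtain ⟨t0, ht0m, ht0min⟩ := (isCompact_Icc).exists_isMinOn
      (Set.nonempty_Icc.mpr hr1.le) hcont1
    have ht0min' : ∀ x ∈ Set.Icc (0:ℝ) r1, b t0 + c t0 ≤ b x + c x :=
      fun x hx => ht0min hx
    have ht0le : b t0 + c t0 ≤ b r1 + c r1 := ht0min' r1 ⟨hr1.le, le_refl r1⟩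
    rcases eq_or_lt_of_le ht0m.1 with h0 | h0
    · -- the minimum is attained at 0, where s = 0; hence s r1 = 0
      have hmin0 : b t0 + c t0 = 0 := by rw [← h0, hib, hic]; ring
      have hsr1 : b r1 + c r1 = 0 := le_antisymm hcon (by linarith)
      have hD1 : 0 < D r1 := hdpos r1 hr1 hsr1.le (hq r1 hr1 hr1ε hsr1.le)
      obtain ⟨t, ht1, ht2, ht3⟩ :=
        exists_left_lt_of_hasDerivAt_pos (hds r1 hr1) hD1 0 hr1
      have := ht0min' t ⟨ht1.le, ht2.le⟩
      linarith
    · -- the minimum is attained at t0 > 0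
      have ht0ε : t0 ≤ ε := le_trans ht0m.2 hr1ε
      have hst0 : b t0 + c t0 ≤ 0 := le_trans ht0le hcon
      have hD0 : 0 < D t0 := hdpos t0 h0 hst0 (hq t0 h0 ht0ε hst0)
      obtain ⟨t, ht1, ht2, ht3⟩ :=
        exists_left_lt_of_hasDerivAt_pos (hds t0 h0) hD0 0 h0
      have := ht0min' t ⟨ht1.le, le_trans ht2.le ht0m.2⟩
      linarith
  -- Step 2: the general case
  intro r0 hr0
  by_contra hcon
  push_neg at hcon
  have hεr0 : ε < r0 := by
    by_contra h
    push_neg at h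
    exact absurd (hpos_eps r0 hr0 h) (not_lt.mpr hcon)
  -- the first point in [ε, r0] where s ≤ 0
  set Z : Set ℝ := Set.Icc ε r0 ∩ (fun r => b r + c r) ⁻¹' Set.Iic 0 with hZdef
  have hZclosed : IsClosed Z :=
    (hscont.mono (fun x hx => le_trans hε.le hx.1)).preimage_isClosed_of_isClosed
      isClosed_Icc isClosed_Iic
  have hZne : Z.Nonempty := ⟨r0, ⟨hεr0.le, le_refl r0⟩, hcon⟩
  have hZbdd : BddBelow Z := ⟨ε, fun x hx => hx.1.1⟩
  set t₀ : ℝ := sInf Z with ht₀def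
  have ht₀Z : t₀ ∈ Z := hZclosed.csInf_mem hZne hZbdd
  have ht₀mem : t₀ ∈ Set.Icc ε r0 := ht₀Z.1
  have hst₀ : b t₀ + c t₀ ≤ 0 := ht₀Z.2
  have hεt₀ : ε < t₀ := by
    rcases lt_or_eq_of_le ht₀mem.1 with h | h
    · exact h
    · exfalso
      have := hpos_eps ε hε (le_refl ε)
      rw [← h] at hst₀
      linarith
  have ht₀pos : 0 < t₀ := lt_trans hε hεt₀
  have hlt : ∀ t, ε ≤ t → t < t₀ → 0 < b t + c t := by
    intro t htε htt₀
    by_contra h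
    push_neg at h
    have : t ∈ Z := ⟨⟨htε, le_trans htt₀.le ht₀mem.2⟩, h⟩
    have := csInf_le hZbdd this
    linarith
  -- s is continuous at t₀, so the left limit shows s t₀ = 0
  have hcat : ContinuousAt (fun r => b r + c r) t₀ :=
    hscont.continuousAt (Ici_mem_nhds ht₀pos)
  have htend : Tendsto (fun r => b r + c r) (𝓝[<] t₀) (𝓝 (b t₀ + c t₀)) :=
    hcat.continuousWithinAt
  have hge : 0 ≤ b t₀ + c t₀ := by
    refine ge_of_tendsto htend ?_
    filter_upwards [Ioo_mem_nhdsLT hεt₀] with t ht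
    exact (hlt t ht.1.le ht.2).le
  have hseq : b t₀ + c t₀ = 0 := le_antisymm hst₀ hge
  have hqt₀ : 0 < a t₀ * (b t₀ + c t₀) + (b t₀ - c t₀) ^ 2 := by
    rw [hseq, mul_zero, zero_add]
    have hb := hbneg t₀ ht₀pos
    have hc := hcpos t₀ ht₀pos
    nlinarith
  have hDt₀ : 0 < D t₀ := hdpos t₀ ht₀pos hst₀ hqt₀
  obtain ⟨t, ht1, ht2, ht3⟩ :=
    exists_left_lt_of_hasDerivAt_pos (hds t₀ ht₀pos) hDt₀ ε hεt₀
  have := hlt t ht1.le ht2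
  linarith
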